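/- arXiv:1805.03347 — 6 statements merged into one kernel-verified Lean document; each statement's English description precedes it below -/
import Mathlib

section
/- If a function A : ℝ>0 × ℝ>0 → ℝ>0 satisfies (1) symmetry: A(x,y) = A(y,x) for all x,y > 0; (2) scaling: A(λx, λy) = λ·A(x,y) for all λ, x, y > 0; and (3) reciprocity: A(1/x, 1/y) = 1/A(x,y) for all x,y > 0, then A(x,y) = √(xy) for all x,y > 0. -/
theorem siegel_two_rates_geometric_mean
    (A : ℝ → ℝ → ℝ)
    (hpos : ∀ x y : ℝ, 0 < x → 0 < y → 0 < A x y)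
    (hsymm : ∀ x y : ℝ, 0 < x → 0 < y → A x y = A y x)
    (hscale : ∀ l x y : ℝ, 0 < l → 0 < x → 0 < y → A (l * x) (l * y) = l * A x y)
    (hrecip : ∀ x y : ℝ, 0 < x → 0 < y → A x⁻¹ y⁻¹ = (A x y)⁻¹) :
    ∀ x y : ℝ, 0 < x → 0 < y → A x y = Real.sqrt (x * y) := by
  have key : ∀ t : ℝ, 0 < t → A 1 t = Real.sqrt t := by
    intro t ht
    have h1 : A 1 t⁻¹ = (A 1 t)⁻¹ := by
      have := hrecip 1 t one_pos ht
      simpa using this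
    have h2 : A t 1 = t * A 1 t⁻¹ := by
      have := hscale t 1 t⁻¹ ht one_pos (inv_pos.mpr ht)
      simpa [mul_inv_cancel₀ ht.ne'] using this
    have h3 : A 1 t = A t 1 := hsymm 1 t one_pos ht
    have hA := hpos 1 t one_pos ht
    have hsq : A 1 t * A 1 t = t := by
      have h : A 1 t = t * (A 1 t)⁻¹ := by
        calc A 1 t = A t 1 := h3
          _ = t * A 1 t⁻¹ := h2
          _ = t * (A 1 t)⁻¹ := by rw [h1]
      field_simp [hA.ne'] at h
      linarith [h]
    have h5 : Real.sqrt (A 1 t * A 1 t) = A 1 t := Real.sqrt_mul_self hA.le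
    rw [hsq] at h5
    exact h5.symm
  intro x y hx hy
  have := hscale x 1 (y / x) hx one_pos (div_pos hy hx)
  rw [mul_one, mul_div_cancel₀ y hx.ne'] at this
  rw [this, key _ (div_pos hy hx)]
  rw [show x * Real.sqrt (y / x) = Real.sqrt (x^2) * Real.sqrt (y/x) by
    rw [Real.sqrt_sq hx.le], ← Real.sqrt_mul (sq_nonneg x)]
  congr 1
  field_simp
end

section
/- For every n ≥ 3, there exist infinitely many functions A : (ℝ>0)ⁿ → ℝ>0 satisfying the symmetry, scaling, and reciprocity axioms. -/
/-- The positive real numbers, as a subtype of `ℝ`. -/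
abbrev PosReal : Type := {x : ℝ // 0 < x}

/-- The aggregator axioms for `A : (ℝ>0)ⁿ → ℝ>0`:
symmetry (A1), scaling (A2), and reciprocity (A3). -/
def IsAggregator {n : ℕ} (A : (Fin n → PosReal) → PosReal) : Prop :=
  (∀ (e : Fin n → PosReal) (σ : Equiv.Perm (Fin n)), A (e ∘ σ) = A e) ∧
    (∀ (e : Fin n → PosReal) (l : PosReal), A (fun i => l * e i) = l * A e) ∧
    (∀ e : Fin n → PosReal, A (fun i => (e i)⁻¹) = (A e)⁻¹)

noncomputable section AggAux
namespace AggAux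

variable {n : ℕ}

/-- Sum of `k`-th powers. -/
def Q (k : ℤ) (e : Fin n → PosReal) : ℝ := ∑ i, ((e i : ℝ)) ^ k

lemma Q_pos (hn : 0 < n) (k : ℤ) (e : Fin n → PosReal) : 0 < Q k e := by
  haveI : Nonempty (Fin n) := Fin.pos_iff_nonempty.mp hn
  exact Finset.sum_pos (fun i _ => zpow_pos (e i).2 k) Finset.univ_nonempty

lemma Q_comp (k : ℤ) (e : Fin n → PosReal) (σ : Equiv.Perm (Fin n)) :
    Q k (e ∘ σ) = Q k e :=
  Fintype.sum_equiv σ _ _ fun _ => rfl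

lemma Q_smul (k : ℤ) (e : Fin n → PosReal) (l : PosReal) :
    Q k (fun i => l * e i) = (l : ℝ) ^ k * Q k e := by
  simp only [Q, Finset.mul_sum]
  refine Finset.sum_congr rfl fun i _ => ?_
  have : ((l * e i : PosReal) : ℝ) = (l : ℝ) * (e i : ℝ) := rfl
  rw [this, mul_zpow]

lemma Q_inv (k : ℤ) (e : Fin n → PosReal) :
    Q k (fun i => (e i)⁻¹) = Q (-k) e := by
  simp only [Q]
  refine Finset.sum_congr rfl fun i _ => ?_
  have : (((e i)⁻¹ : PosReal) : ℝ) = ((e i : ℝ))⁻¹ := rfl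
  rw [this, inv_zpow, ← zpow_neg]

/-- The two basic ratios. -/
def R1 (e : Fin n → PosReal) : ℝ := Q 1 e / Q (-1) e
def R2 (e : Fin n → PosReal) : ℝ := Q 2 e / Q (-2) e

lemma R1_pos (hn : 0 < n) (e : Fin n → PosReal) : 0 < R1 e :=
  div_pos (Q_pos hn 1 e) (Q_pos hn (-1) e)

lemma R2_pos (hn : 0 < n) (e : Fin n → PosReal) : 0 < R2 e :=
  div_pos (Q_pos hn 2 e) (Q_pos hn (-2) e)

/-- The aggregator family. -/
def B (c : ℝ) (e : Fin n → PosReal) : ℝ :=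
  R1 e ^ c * R2 e ^ ((1 - 2 * c) / 4)

lemma B_pos (hn : 0 < n) (c : ℝ) (e : Fin n → PosReal) : 0 < B c e :=
  mul_pos (Real.rpow_pos_of_pos (R1_pos hn e) _)
    (Real.rpow_pos_of_pos (R2_pos hn e) _)

def A (hn : 0 < n) (c : ℝ) (e : Fin n → PosReal) : PosReal :=
  ⟨B c e, B_pos hn c e⟩

lemma isAggregator_A (hn : 0 < n) (c : ℝ) : IsAggregator (A hn c) := by
  refine ⟨fun e σ => ?_, fun e l => ?_, fun e => ?_⟩
  · apply Subtype.ext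
    simp only [A, B, R1, R2, Q_comp]
  · apply Subtype.ext
    have hco : ((l * A hn c e : PosReal) : ℝ) = (l : ℝ) * B c e := rfl
    rw [hco]
    have h1 : R1 (fun i => l * e i) = (l : ℝ) ^ (2 : ℝ) * R1 e := by
      rw [R1, Q_smul, Q_smul, ← Real.rpow_intCast (l:ℝ) 1, ← Real.rpow_intCast (l:ℝ) (-1),
        mul_div_mul_comm, ← Real.rpow_sub l.2, R1]
      norm_num
    have h2 : R2 (fun i => l * e i) = (l : ℝ) ^ (4 : ℝ) * R2 e := by
      rw [R2, Q_smul, Q_smul, ← Real.rpow_intCast (l:ℝ) 2, ← Real.rpow_intCast (l:ℝ) (-2),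
        mul_div_mul_comm, ← Real.rpow_sub l.2, R2]
      norm_num
    show B c (fun i => l * e i) = (l : ℝ) * B c e
    rw [B, h1, h2,
      Real.mul_rpow (Real.rpow_pos_of_pos l.2 _).le (R1_pos hn e).le,
      Real.mul_rpow (Real.rpow_pos_of_pos l.2 _).le (R2_pos hn e).le,
      mul_mul_mul_comm, ← Real.rpow_mul l.2.le, ← Real.rpow_mul l.2.le,
      ← Real.rpow_add l.2, show (2:ℝ) * c + 4 * ((1 - 2*c)/4) = 1 by ring,
      Real.rpow_one, B]
  · apply Subtype.ext
    have hco : (((A hn c e)⁻¹ : PosReal) : ℝ) = (B c e)⁻¹ := rfl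
    rw [hco]
    have h1 : R1 (fun i => (e i)⁻¹) = (R1 e)⁻¹ := by
      simp only [R1, Q_inv]; norm_num
    have h2 : R2 (fun i => (e i)⁻¹) = (R2 e)⁻¹ := by
      simp only [R2, Q_inv]; norm_num
    show B c (fun i => (e i)⁻¹) = (B c e)⁻¹
    rw [B, h1, h2, Real.inv_rpow (R1_pos hn e).le, Real.inv_rpow (R2_pos hn e).le,
      ← mul_inv, B]

/-- The distinguished point `(2,1,…,1)`. -/
def e₀ (hn : 0 < n) : Fin n → PosReal := fun i =>
  if i = ⟨0, hn⟩ then ⟨2, two_pos⟩ else ⟨1, one_pos⟩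

lemma Q_e₀ (hn : 0 < n) (k : ℤ) : Q k (e₀ hn) = (2:ℝ) ^ k - 1 + n := by
  have : ∀ i : Fin n, ((e₀ hn i : ℝ)) ^ k
      = (if i = ⟨0, hn⟩ then (2:ℝ) ^ k - 1 else 0) + 1 := by
    intro i
    by_cases h : i = ⟨0, hn⟩ <;> simp [e₀, h]
  simp only [Q, this, Finset.sum_add_distrib, Finset.sum_ite_eq' Finset.univ,
    Finset.mem_univ, if_true, Finset.sum_const, Finset.card_univ, Fintype.card_fin,
    nsmul_eq_mul, mul_one]

lemma key_ineq (hn : 3 ≤ n) : R1 (e₀ (by omega : 0 < n)) ^ (2:ℕ) < R2 (e₀ (by omega : 0 < n)) := by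
  have hN : (3:ℝ) ≤ (n:ℝ) := by exact_mod_cast hn
  have h1 : Q 1 (e₀ (by omega : 0 < n)) = (n:ℝ) + 1 := by rw [Q_e₀]; norm_num; try ring
  have h2 : Q (-1) (e₀ (by omega : 0 < n)) = (n:ℝ) - 1/2 := by rw [Q_e₀]; norm_num; try ring
  have h3 : Q 2 (e₀ (by omega : 0 < n)) = (n:ℝ) + 3 := by rw [Q_e₀]; norm_num; try ring
  have h4 : Q (-2) (e₀ (by omega : 0 < n)) = (n:ℝ) - 3/4 := by rw [Q_e₀]; norm_num; try ring
  rw [R1, R2, h1, h2, h3, h4, div_pow, div_lt_div_iff₀ (by nlinarith) (by nlinarith)]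
  nlinarith [sq_nonneg ((n:ℝ) - 2)]

lemma A_injective (hn : 3 ≤ n) : Function.Injective (A (show 0 < n by omega) : ℝ → _) := by
  intro c c' h
  have hpos : (0:ℕ) < n := by omega
  set e := e₀ hpos with he
  have hB : B c e = B c' e := congrArg Subtype.val (congrFun h e)
  have hr1 := R1_pos hpos e
  have hr2 := R2_pos hpos e
  have hlog : c * Real.log (R1 e) + (1 - 2*c)/4 * Real.log (R2 e)
      = c' * Real.log (R1 e) + (1 - 2*c')/4 * Real.log (R2 e) := by
    have := congrArg Real.log hB
    rwa [B, B, Real.log_mul (by positivity) (by positivity),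
      Real.log_mul (by positivity) (by positivity),
      Real.log_rpow hr1, Real.log_rpow hr2, Real.log_rpow hr1, Real.log_rpow hr2] at this
  have hkey : 2 * Real.log (R1 e) ≠ Real.log (R2 e) := by
    intro hcontra
    have h2' : Real.log (R1 e ^ (2:ℕ)) = Real.log (R2 e) := by
      rw [Real.log_pow]; push_cast; linarith
    have := Real.log_injOn_pos (Set.mem_Ioi.mpr (by positivity))
      (Set.mem_Ioi.mpr hr2) h2'
    exact absurd this (ne_of_lt (key_ineq hn))
  have : (c - c') * (Real.log (R1 e) - Real.log (R2 e) / 2) = 0 := by linarith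
  rcases mul_eq_zero.mp this with h' | h'
  · linarith [sub_eq_zero.mp h']
  · exfalso; apply hkey; linarith

end AggAux
end AggAux

theorem infinitely_many_aggregators {n : ℕ} (hn : 3 ≤ n) :
    {A : (Fin n → PosReal) → PosReal | IsAggregator A}.Infinite := by
  exact Set.infinite_of_injective_forall_mem (AggAux.A_injective hn)
    (fun c => AggAux.isAggregator_A (show 0 < n by omega) c)
end

section
/- Let β : (ℝ≥1)^(n-1) → ℝ>0 satisfy β(u₁,…,u_{n-1})·β(u_{n-1},…,u₁) = 1 for all u₁,…,u_{n-1} ≥ 1. Then the function A(e₁,…,eₙ) = (e₁⋯eₙ)^(1/n) · β(e^(n)/e^(n-1), …, e^(2)/e^(1)), where e^(1) ≤ … ≤ e^(n) are the order statistics of e₁,…,eₙ, satisfies the symmetry, scaling, and reciprocity axioms for aggregators. -/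
/-- The order statistics of a tuple of reals: the tuple rearranged increasingly. -/
noncomputable def osort {n : ℕ} (e : Fin n → ℝ) : Fin n → ℝ :=
  e ∘ Tuple.sort e

/-- The tuple of consecutive ratios of order statistics,
`(e⁽ⁿ⁾/e⁽ⁿ⁻¹⁾, …, e⁽²⁾/e⁽¹⁾)`. -/
noncomputable def ratios {n : ℕ} (e : Fin n → ℝ) : Fin (n - 1) → ℝ :=
  fun k => osort e ⟨n - 1 - (k : ℕ), by have := k.isLt; omega⟩ /
    osort e ⟨n - 2 - (k : ℕ), by have := k.isLt; omega⟩

lemma osort_comp_perm {n : ℕ} (e : Fin n → ℝ) (σ : Equiv.Perm (Fin n)) :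
    osort (e ∘ σ) = osort e :=
  Tuple.comp_perm_comp_sort_eq_comp_sort (σ := σ) (f := e)

lemma osort_mono {n : ℕ} (e : Fin n → ℝ) : Monotone (osort e) :=
  Tuple.monotone_sort e

lemma osort_pos {n : ℕ} {e : Fin n → ℝ} (he : ∀ i, 0 < e i) (i : Fin n) :
    0 < osort e i := he _

lemma osort_smul {n : ℕ} (e : Fin n → ℝ) {l : ℝ} (hl : 0 < l) :
    osort (fun i => l * e i) = fun i => l * osort e i := by
  have h : (fun i => l * e i) ∘ (Tuple.sort e) =
      (fun i => l * e i) ∘ Tuple.sort (fun i => l * e i) := by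
    rw [Tuple.comp_sort_eq_comp_iff_monotone]
    exact fun a b hab => mul_le_mul_of_nonneg_left (osort_mono e hab) hl.le
  funext i
  have := congrFun h.symm i
  simpa [osort, Function.comp] using this

lemma osort_inv {n : ℕ} {e : Fin n → ℝ} (he : ∀ i, 0 < e i) :
    osort (fun i => (e i)⁻¹) = fun i => (osort e i.rev)⁻¹ := by
  have h : (fun i => (e i)⁻¹) ∘ ((Fin.revPerm.trans (Tuple.sort e)) : Equiv.Perm (Fin n)) =
      (fun i => (e i)⁻¹) ∘ Tuple.sort (fun i => (e i)⁻¹) := by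
    rw [Tuple.comp_sort_eq_comp_iff_monotone]
    intro a b hab
    simp only [Function.comp, Equiv.trans_apply, Fin.revPerm_apply]
    have hmono : osort e (Fin.rev b) ≤ osort e (Fin.rev a) :=
      osort_mono e (Fin.rev_le_rev.mpr hab)
    exact inv_anti₀ (osort_pos he _) hmono
  funext i
  have := congrFun h.symm i
  simpa [osort, Function.comp] using this

lemma ratios_one_le {n : ℕ} {e : Fin n → ℝ} (he : ∀ i, 0 < e i) (k : Fin (n - 1)) :
    1 ≤ ratios e k := by
  rw [ratios, le_div_iff₀ (osort_pos he _), one_mul]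
  exact osort_mono e (by simp [Fin.le_def]; omega)

theorem aggregator_from_reciprocity_function {n : ℕ} (hn : 0 < n)
    (β : (Fin (n - 1) → ℝ) → ℝ)
    (hβrec : ∀ u : Fin (n - 1) → ℝ, (∀ i, 1 ≤ u i) →
      β u * β (u ∘ Fin.rev) = 1)
    (A : (Fin n → ℝ) → ℝ)
    (hA : ∀ e : Fin n → ℝ, (∀ i, 0 < e i) →
      A e = (∏ i, e i) ^ ((n : ℝ)⁻¹) * β (ratios e)) :
    (∀ e : Fin n → ℝ, (∀ i, 0 < e i) →
      ∀ σ : Equiv.Perm (Fin n), A (e ∘ σ) = A e) ∧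
    (∀ e : Fin n → ℝ, (∀ i, 0 < e i) →
      ∀ l : ℝ, 0 < l → A (fun i => l * e i) = l * A e) ∧
    (∀ e : Fin n → ℝ, (∀ i, 0 < e i) →
      A (fun i => (e i)⁻¹) = (A e)⁻¹) := by
  refine ⟨?_, ?_, ?_⟩
  · intro e he σ
    rw [hA (e ∘ σ) (fun i => he (σ i)), hA e he]
    have h1 : ∏ i, (e ∘ σ) i = ∏ i, e i := Equiv.prod_comp σ e
    have h2 : ratios (e ∘ σ) = ratios e := by
      unfold ratios; rw [osort_comp_perm]
    rw [h1, h2]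
  · intro e he l hl
    have he' : ∀ i, 0 < l * e i := fun i => mul_pos hl (he i)
    rw [hA _ he', hA e he]
    have h2 : ratios (fun i => l * e i) = ratios e := by
      unfold ratios
      rw [osort_smul e hl]
      funext k
      rw [mul_div_mul_left _ _ hl.ne']
    have h1 : (∏ i, l * e i) = l ^ n * ∏ i, e i := by
      rw [Finset.prod_mul_distrib, Finset.prod_const, Finset.card_univ, Fintype.card_fin]
    have hprod : (0:ℝ) < ∏ i, e i := Finset.prod_pos fun i _ => he i
    rw [h1, h2, Real.mul_rpow (by positivity) hprod.le,
      ← Real.rpow_natCast l n, ← Real.rpow_mul hl.le,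
      mul_inv_cancel₀ (by exact_mod_cast hn.ne'), Real.rpow_one, mul_assoc]
  · intro e he
    have he' : ∀ i, 0 < (e i)⁻¹ := fun i => inv_pos.mpr (he i)
    rw [hA _ he', hA e he]
    have h2 : ratios (fun i => (e i)⁻¹) = (ratios e) ∘ Fin.rev := by
      funext k
      have hk := k.isLt
      simp only [ratios, Function.comp, osort_inv he]
      have hr1 : Fin.rev (⟨n - 1 - (k : ℕ), by omega⟩ : Fin n) =
          ⟨n - 2 - ((Fin.rev k : Fin (n-1)) : ℕ), by omega⟩ := by
        simp [Fin.rev, Fin.ext_iff]; omega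
      have hr2 : Fin.rev (⟨n - 2 - (k : ℕ), by omega⟩ : Fin n) =
          ⟨n - 1 - ((Fin.rev k : Fin (n-1)) : ℕ), by omega⟩ := by
        simp [Fin.rev, Fin.ext_iff]; omega
      rw [hr1, hr2, inv_div_inv]
    have hβ : β (ratios e ∘ Fin.rev) = (β (ratios e))⁻¹ :=
      (inv_eq_of_mul_eq_one_right (hβrec _ (ratios_one_le he))).symm
    have h1 : (∏ i, (e i)⁻¹) = (∏ i, e i)⁻¹ := by
      rw [← Finset.prod_inv_distrib]
    have hprod : (0:ℝ) < ∏ i, e i := Finset.prod_pos fun i _ => he i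
    rw [h2, h1, hβ, Real.inv_rpow hprod.le, mul_inv]
end

section
/- Every function A : (ℝ>0)ⁿ → ℝ>0 satisfying the symmetry, scaling, and reciprocity axioms has the form A(e₁,…,eₙ) = (e₁⋯eₙ)^(1/n) · β(e^(n)/e^(n-1), …, e^(2)/e^(1)) for some reciprocity function β : (ℝ≥1)^(n-1) → ℝ>0, where e^(1) ≤ … ≤ e^(n) denote the order statistics of the inputs. -/
/-- One multiplicative step used to rebuild a tuple from its ratios. -/
noncomputable def Estep (n : ℕ) (u : Fin (n - 1) → ℝ) (m : ℕ) : ℝ :=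
  if h : n - 2 - m < n - 1 then u ⟨n - 2 - m, h⟩ else 1

/-- The canonical monotone tuple with minimum `1` whose consecutive ratios are `u`. -/
noncomputable def Emap (n : ℕ) (u : Fin (n - 1) → ℝ) : Fin n → ℝ :=
  fun j => ∏ m ∈ Finset.range (j : ℕ), Estep n u m

/-- The consecutive-ratio map for an arbitrary tuple (no sorting). -/
noncomputable def rat (n : ℕ) (s : Fin n → ℝ) : Fin (n - 1) → ℝ :=
  fun k => s ⟨n - 1 - (k : ℕ), by have := k.isLt; omega⟩ /
    s ⟨n - 2 - (k : ℕ), by have := k.isLt; omega⟩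

lemma ratios_eq_rat {n : ℕ} (e : Fin n → ℝ) : ratios e = rat n (osort e) := rfl

lemma one_le_emap (n : ℕ) (u : Fin (n - 1) → ℝ) (hu : ∀ i, 1 ≤ u i) (j : Fin n) :
    1 ≤ Emap n u j := by
  unfold Emap
  have h : ∀ m ∈ Finset.range (j : ℕ), (1:ℝ) ≤ Estep n u m := by
    intro m _
    unfold Estep
    split
    · exact hu _
    · exact le_rfl
  calc (1:ℝ) = ∏ _m ∈ Finset.range (j : ℕ), 1 := by simp
    _ ≤ ∏ m ∈ Finset.range (j : ℕ), Estep n u m :=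
        Finset.prod_le_prod (fun m _ => by norm_num) h

lemma emap_succ (n : ℕ) (u : Fin (n - 1) → ℝ) (t : ℕ) (ht : t + 1 < n) :
    Emap n u ⟨t + 1, ht⟩ = Emap n u ⟨t, by omega⟩ * Estep n u t :=
  Finset.prod_range_succ _ _

lemma emap_eq (n : ℕ) (s : Fin n → ℝ) (hs : ∀ i, 0 < s i)
    (t : ℕ) (ht : t < n) :
    Emap n (rat n s) ⟨t, ht⟩ = s ⟨t, ht⟩ / s ⟨0, by omega⟩ := by
  induction t with
  | zero => simp [Emap, div_self (hs _).ne']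
  | succ t ih =>
    have ht' : t < n := by omega
    rw [emap_succ n _ t ht, ih ht']
    have hE : Estep n (rat n s) t = s ⟨t + 1, ht⟩ / s ⟨t, ht'⟩ := by
      unfold Estep rat
      rw [dif_pos (by omega : n - 2 - t < n - 1)]
      have h1 : (⟨n - 1 - (n - 2 - t), by omega⟩ : Fin n) = ⟨t + 1, ht⟩ := by
        simp only [Fin.mk.injEq]; omega
      have h2 : (⟨n - 2 - (n - 2 - t), by omega⟩ : Fin n) = ⟨t, ht'⟩ := by
        simp only [Fin.mk.injEq]; omega
      rw [h1, h2]
    have n1 : s ⟨t, ht'⟩ ≠ 0 := (hs _).ne'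
    have n2 : s ⟨0, by omega⟩ ≠ 0 := (hs _).ne'
    rw [hE]
    field_simp

lemma key {n : ℕ} (hn : 0 < n) (A : (Fin n → ℝ) → ℝ)
    (hscale : ∀ e : Fin n → ℝ, (∀ i, 0 < e i) →
      ∀ l : ℝ, 0 < l → A (fun i => l * e i) = l * A e)
    (s : Fin n → ℝ) (hs : ∀ i, 0 < s i) :
    A (Emap n (rat n s)) * ((∏ j, Emap n (rat n s) j) ^ ((n : ℝ)⁻¹))⁻¹
      = A s * ((∏ j, s j) ^ ((n : ℝ)⁻¹))⁻¹ := by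
  have h0 : 0 < s ⟨0, hn⟩ := hs _
  have hfun : Emap n (rat n s) = fun j => (s ⟨0, hn⟩)⁻¹ * s j := by
    funext j
    rcases j with ⟨t, ht⟩
    rw [emap_eq n s hs t ht, div_eq_inv_mul]
  rw [hfun, hscale s hs _ (inv_pos.mpr h0)]
  have hP : 0 < ∏ j, s j := Finset.prod_pos (fun i _ => hs i)
  have hprod : ∏ j, ((s ⟨0, hn⟩)⁻¹ * s j) = ((s ⟨0, hn⟩)⁻¹) ^ n * ∏ j, s j := by
    rw [Finset.prod_mul_distrib, Finset.prod_const, Finset.card_univ, Fintype.card_fin]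
  rw [hprod, Real.mul_rpow (by positivity) hP.le,
    ← Real.rpow_natCast ((s ⟨0, hn⟩)⁻¹) n, ← Real.rpow_mul (by positivity),
    mul_inv_cancel₀ (by exact_mod_cast hn.ne'), Real.rpow_one, mul_inv, inv_inv]
  have hx : ((∏ j, s j) ^ ((n : ℝ)⁻¹))⁻¹ ≠ 0 := by positivity
  field_simp

theorem aggregator_classification {n : ℕ} (A : (Fin n → ℝ) → ℝ)
    (hpos : ∀ e : Fin n → ℝ, (∀ i, 0 < e i) → 0 < A e)
    (hsymm : ∀ e : Fin n → ℝ, (∀ i, 0 < e i) →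
      ∀ σ : Equiv.Perm (Fin n), A (e ∘ σ) = A e)
    (hscale : ∀ e : Fin n → ℝ, (∀ i, 0 < e i) →
      ∀ l : ℝ, 0 < l → A (fun i => l * e i) = l * A e)
    (hrecip : ∀ e : Fin n → ℝ, (∀ i, 0 < e i) →
      A (fun i => (e i)⁻¹) = (A e)⁻¹) :
    ∃ β : (Fin (n - 1) → ℝ) → ℝ,
      (∀ u : Fin (n - 1) → ℝ, (∀ i, 1 ≤ u i) → 0 < β u) ∧
      (∀ u : Fin (n - 1) → ℝ, (∀ i, 1 ≤ u i) →
        β u * β (u ∘ Fin.rev) = 1) ∧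
      (∀ e : Fin n → ℝ, (∀ i, 0 < e i) →
        A e = (∏ i, e i) ^ ((n : ℝ)⁻¹) * β (ratios e)) := by
  rcases Nat.eq_zero_or_pos n with hn | hn
  · -- n = 0 : all tuples are equal
    subst hn
    set e₀ : Fin 0 → ℝ := fun _ => 1 with he₀
    have hpos₀ : ∀ i : Fin 0, 0 < e₀ i := fun i => i.elim0
    have hA₀ : 0 < A e₀ := hpos e₀ hpos₀
    have hall : ∀ e : Fin 0 → ℝ, e = e₀ := fun e => funext fun i => i.elim0
    refine ⟨fun _ => A e₀, fun _ _ => hA₀, fun u _ => ?_, fun e he => ?_⟩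
    · have h : A e₀ = (A e₀)⁻¹ :=
        (congrArg A (hall fun i => (e₀ i)⁻¹)).symm.trans (hrecip e₀ hpos₀)
      show A e₀ * A e₀ = 1
      nth_rewrite 2 [h]
      exact mul_inv_cancel₀ hA₀.ne'
    · simp only [Finset.univ_eq_empty, Finset.prod_empty, Real.one_rpow, one_mul]
      exact congrArg A (hall e)
  · -- n > 0
    refine ⟨fun u => A (Emap n u) * ((∏ j, Emap n u j) ^ ((n : ℝ)⁻¹))⁻¹,
      ?_, ?_, ?_⟩
    · -- positivity
      intro u hu
      have hE : ∀ j, 0 < Emap n u j := fun j =>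
        lt_of_lt_of_le one_pos (one_le_emap n u hu j)
      have hAE : 0 < A (Emap n u) := hpos _ hE
      have hP : 0 < ∏ j, Emap n u j := Finset.prod_pos fun j _ => hE j
      positivity
    · -- reciprocity
      intro u hu
      show A (Emap n u) * ((∏ j, Emap n u j) ^ ((n : ℝ)⁻¹))⁻¹
        * (A (Emap n (u ∘ Fin.rev))
          * ((∏ j, Emap n (u ∘ Fin.rev) j) ^ ((n : ℝ)⁻¹))⁻¹) = 1
      have hfpos : ∀ j, 0 < Emap n u j := fun j =>
        lt_of_lt_of_le one_pos (one_le_emap n u hu j)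
      set f : Fin n → ℝ := Emap n u with hf
      set g : Fin n → ℝ := fun j => (f (Fin.rev j))⁻¹ with hg
      clear_value f g
      have hgpos : ∀ j, 0 < g j := by
        intro j
        rw [hg]
        exact inv_pos.mpr (hfpos _)
      have hAg : A g = (A f)⁻¹ := by
        have h1 : A ((fun i => (f i)⁻¹) ∘ Fin.revPerm) = A (fun i => (f i)⁻¹) :=
          hsymm (fun i => (f i)⁻¹) (fun i => inv_pos.mpr (hfpos i)) Fin.revPerm
        have h2 : g = (fun i => (f i)⁻¹) ∘ Fin.revPerm := by
          funext j; simp [hg]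
        rw [h2, h1, hrecip f hfpos]
      have hPg : ∏ j, g j = (∏ j, f j)⁻¹ := by
        rw [hg, ← Finset.prod_inv_distrib]
        exact Fintype.prod_equiv Fin.revPerm _ _ (fun i => rfl)
      have hc : rat n g = u ∘ Fin.rev := by
        funext k
        have hk := k.isLt
        have hn2 : 2 ≤ n := by omega
        have hstep : f ⟨(k : ℕ) + 1, by omega⟩
            = f ⟨(k : ℕ), by omega⟩ * u ⟨n - 2 - (k : ℕ), by omega⟩ := by
          rw [hf, emap_succ n u k (by omega)]
          congr 1
          unfold Estep
          rw [dif_pos (by omega : n - 2 - (k : ℕ) < n - 1)]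
        have v1 : g ⟨n - 1 - (k : ℕ), by omega⟩ = (f ⟨(k : ℕ), by omega⟩)⁻¹ := by
          have hr : Fin.rev (⟨n - 1 - (k : ℕ), by omega⟩ : Fin n)
              = ⟨(k : ℕ), by omega⟩ := by
            ext; simp only [Fin.val_rev]; omega
          rw [hg]
          show (f (Fin.rev ⟨n - 1 - (k : ℕ), by omega⟩))⁻¹ = _
          rw [hr]
        have v2 : g ⟨n - 2 - (k : ℕ), by omega⟩
            = (f ⟨(k : ℕ) + 1, by omega⟩)⁻¹ := by
          have hr : Fin.rev (⟨n - 2 - (k : ℕ), by omega⟩ : Fin n)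
              = ⟨(k : ℕ) + 1, by omega⟩ := by
            ext; simp only [Fin.val_rev]; omega
          rw [hg]
          show (f (Fin.rev ⟨n - 2 - (k : ℕ), by omega⟩))⁻¹ = _
          rw [hr]
        have hrevk : (u ∘ Fin.rev) k = u ⟨n - 2 - (k : ℕ), by omega⟩ := by
          simp only [Function.comp_apply]
          congr 1
          ext
          simp only [Fin.val_rev]
          omega
        rw [hrevk]
        show g ⟨n - 1 - (k : ℕ), by omega⟩ / g ⟨n - 2 - (k : ℕ), by omega⟩ = _
        rw [v1, v2, hstep]
        have n1 : f ⟨(k : ℕ), by omega⟩ ≠ 0 := (hfpos _).ne'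
        have hu' : u ⟨n - 2 - (k : ℕ), by omega⟩ ≠ 0 := by
          have := hu ⟨n - 2 - (k : ℕ), by omega⟩; linarith
        field_simp
      have hkey := key hn A hscale g hgpos
      rw [hc] at hkey
      have hPf : 0 < ∏ j, f j := Finset.prod_pos fun j _ => hfpos j
      have hAf : 0 < A f := hpos f hfpos
      rw [hkey, hAg, hPg, Real.inv_rpow hPf.le, inv_inv]
      have hx : (0:ℝ) < (∏ j, f j) ^ ((n : ℝ)⁻¹) := Real.rpow_pos_of_pos hPf _
      field_simp
    · -- the formula
      intro e he
      show A e = (∏ i, e i) ^ ((n : ℝ)⁻¹)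
        * (A (Emap n (ratios e)) * ((∏ j, Emap n (ratios e) j) ^ ((n : ℝ)⁻¹))⁻¹)
      have hs : ∀ i, 0 < osort e i := fun i => he _
      have hAs : A (osort e) = A e := hsymm e he (Tuple.sort e)
      have hPs : ∏ j, osort e j = ∏ i, e i := Equiv.prod_comp (Tuple.sort e) e
      have hk := key hn A hscale (osort e) hs
      rw [ratios_eq_rat, hk, hAs, hPs]
      have hP : 0 < ∏ i, e i := Finset.prod_pos fun i _ => he i
      have hx : (0:ℝ) < (∏ i, e i) ^ ((n : ℝ)⁻¹) := Real.rpow_pos_of_pos hP _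
      field_simp
end

section
/- If h : ℝⁿ → ℝ is symmetric under permutations of its arguments, invariant under translation by (λ,…,λ) for every λ ∈ ℝ, and odd (h(-x) = -h(x)), then for u₁,…,u_{n-1} > 0 the function β(u_{n-1},…,u₁) = exp(h(0, log u₁, log(u₁u₂), …, log(u₁⋯u_{n-1}))) satisfies β(u₁,…,u_{n-1})·β(u_{n-1},…,u₁) = 1. -/
/-- Given `w = (w₁, …, w_{n-1})`, the tuple `(0, log w_{n-1}, log (w_{n-1}w_{n-2}), …,
log (w_{n-1} ⋯ w₁))`, so that `betaOf h (u_{n-1}, …, u₁) =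
exp (h (0, log u₁, log (u₁u₂), …, log (u₁ ⋯ u_{n-1})))`. -/
noncomputable def cumLog {n : ℕ} (w : Fin (n - 1) → ℝ) : Fin n → ℝ :=
  fun i => ∑ j : Fin (n - 1), if (j : ℕ) < (i : ℕ) then Real.log (w (Fin.rev j)) else 0

/-- The candidate reciprocity function induced by a log-defect function `h`. -/
noncomputable def betaOf {n : ℕ} (h : (Fin n → ℝ) → ℝ) (w : Fin (n - 1) → ℝ) : ℝ :=
  Real.exp (h (cumLog w))

theorem induced_beta_is_reciprocity {n : ℕ} (h : (Fin n → ℝ) → ℝ)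
    (hsymm : ∀ (x : Fin n → ℝ) (σ : Equiv.Perm (Fin n)), h (x ∘ σ) = h x)
    (htrans : ∀ (x : Fin n → ℝ) (c : ℝ), h (fun i => x i + c) = h x)
    (hodd : ∀ x : Fin n → ℝ, h (fun i => -x i) = -h x) :
    ∀ u : Fin (n - 1) → ℝ, (∀ i, 0 < u i) →
      betaOf h u * betaOf h (u ∘ Fin.rev) = 1 := by
  intro u _
  set S : ℝ := ∑ j : Fin (n - 1), Real.log (u j) with hS
  have key : ∀ i : Fin n, cumLog (u ∘ Fin.rev) i = -(cumLog u (Fin.rev i)) + S := by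
    intro i
    have h1 : cumLog (u ∘ Fin.rev) i
        = ∑ j : Fin (n - 1), if (j : ℕ) < (i : ℕ) then Real.log (u j) else 0 := by
      simp [cumLog, Function.comp, Fin.rev_rev]
    have h2 : cumLog u (Fin.rev i)
        = ∑ j : Fin (n - 1), if ¬ ((j : ℕ) < (i : ℕ)) then Real.log (u j) else 0 := by
      rw [cumLog, ← Equiv.sum_comp (Fin.revPerm) (fun j : Fin (n - 1) =>
        if (j : ℕ) < ((Fin.rev i : Fin n) : ℕ) then Real.log (u (Fin.rev j)) else 0)]
      refine Finset.sum_congr rfl fun j _ => ?_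
      have hj := j.isLt
      have hi := i.isLt
      have hcond : (((Fin.revPerm j : Fin (n-1)) : ℕ) < ((Fin.rev i : Fin n) : ℕ))
          ↔ ¬ ((j : ℕ) < (i : ℕ)) := by
        simp only [Fin.revPerm_apply, Fin.val_rev]
        omega
      rw [if_congr hcond rfl rfl]
      simp [Fin.rev_rev]
    rw [h1, h2, hS, neg_add_eq_sub, eq_sub_iff_add_eq, ← Finset.sum_add_distrib]
    refine Finset.sum_congr rfl fun j _ => ?_
    by_cases hc : (j : ℕ) < (i : ℕ) <;> simp [hc]
  have hkey2 : h (cumLog (u ∘ Fin.rev)) = - h (cumLog u) := by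
    have e1 : cumLog (u ∘ Fin.rev)
        = fun i => (fun k => -(cumLog u ∘ Fin.revPerm) k) i + S := by
      funext i; simpa using key i
    rw [e1, htrans, hodd, hsymm]
  rw [betaOf, betaOf, hkey2, ← Real.exp_add, add_neg_cancel, Real.exp_zero]
end

section
/- Any aggregator A : (ℝ>0)ⁿ → ℝ>0 satisfying symmetry, scaling, and reciprocity agrees with the geometric mean on constant tuples and, more generally, on any tuple that equals the reversal of its rescaled reciprocal: if (e₁,…,eₙ) sorted increasingly satisfies e^(k)·e^(n+1-k) = c for all k and some constant c > 0, then A(e₁,…,eₙ) = √c = (e₁⋯eₙ)^(1/n). -/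
theorem aggregator_on_self_reciprocal_tuples {n : ℕ} (hn : 0 < n)
    (A : (Fin n → ℝ) → ℝ)
    (hpos : ∀ e : Fin n → ℝ, (∀ i, 0 < e i) → 0 < A e)
    (hsymm : ∀ e : Fin n → ℝ, (∀ i, 0 < e i) →
      ∀ σ : Equiv.Perm (Fin n), A (e ∘ σ) = A e)
    (hscale : ∀ e : Fin n → ℝ, (∀ i, 0 < e i) →
      ∀ l : ℝ, 0 < l → A (fun i => l * e i) = l * A e)
    (hrecip : ∀ e : Fin n → ℝ, (∀ i, 0 < e i) →
      A (fun i => (e i)⁻¹) = (A e)⁻¹)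
    (e : Fin n → ℝ) (hepos : ∀ i, 0 < e i)
    (c : ℝ) (hc : 0 < c)
    (hself : ∀ k : Fin n, osort e k * osort e (Fin.rev k) = c) :
    A e = Real.sqrt c ∧ Real.sqrt c = (∏ i, e i) ^ ((n : ℝ)⁻¹) := by
  set σ := Tuple.sort e with hσdef
  have hApos : 0 < A e := hpos e hepos
  -- the rescaled reciprocal tuple is a permutation of e
  have key : (fun i => c * (e i)⁻¹) = e ∘ (σ * Fin.revPerm * σ⁻¹ : Equiv.Perm (Fin n)) := by
    funext i
    have h := hself (σ⁻¹ i)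
    simp only [osort, Function.comp_apply, hσdef] at h
    rw [Equiv.Perm.inv_def, Equiv.apply_symm_apply, ← Equiv.Perm.inv_def] at h
    have hne : e i ≠ 0 := (hepos i).ne'
    simp only [Function.comp_apply, Equiv.Perm.mul_apply, Fin.revPerm_apply]
    rw [← h, mul_comm (e i), mul_inv_cancel_right₀ hne]
  -- A e = sqrt c
  have hinvpos : ∀ i, 0 < (e i)⁻¹ := fun i => inv_pos.mpr (hepos i)
  have h1 : A (fun i => c * (e i)⁻¹) = c * (A e)⁻¹ := by
    rw [hscale _ hinvpos c hc, hrecip e hepos]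
  have h2 : A (fun i => c * (e i)⁻¹) = A e := by
    rw [key]; exact hsymm e hepos _
  have hsq : A e * A e = c := by
    have := h1.symm.trans h2
    field_simp at this
    linarith [this]
  have hfst : A e = Real.sqrt c := by
    rw [← hsq, Real.sqrt_mul_self hApos.le]
  refine ⟨hfst, ?_⟩
  -- product identity
  have hprod : ∏ i, e i = ∏ i, osort e i := by
    simp only [osort]
    exact (Equiv.prod_comp σ e).symm
  have hPpos : 0 < ∏ i, e i := Finset.prod_pos fun i _ => hepos i
  have hsqP : (∏ i, e i) * (∏ i, e i) = c ^ n := by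
    rw [hprod]
    have hrev : ∏ i, osort e i = ∏ i, osort e (Fin.rev i) :=
      (Equiv.prod_comp (Fin.revPerm) (osort e)).symm
    calc (∏ i, osort e i) * (∏ i, osort e i)
        = (∏ i, osort e i) * ∏ i, osort e (Fin.rev i) := by rw [← hrev]
      _ = ∏ i, (osort e i * osort e (Fin.rev i)) := (Finset.prod_mul_distrib).symm
      _ = ∏ _i : Fin n, c := Finset.prod_congr rfl fun i _ => hself i
      _ = c ^ n := by simp
  have hn' : (n:ℝ) ≠ 0 := Nat.cast_ne_zero.mpr hn.ne'
  have hP : (∏ i, e i) = Real.sqrt (c ^ n) := by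
    rw [← hsqP, Real.sqrt_mul_self hPpos.le]
  rw [hP, Real.sqrt_eq_rpow, Real.sqrt_eq_rpow, ← Real.rpow_natCast c n,
    ← Real.rpow_mul hc.le, ← Real.rpow_mul hc.le]
  congr 1
  field_simp
end
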